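/- For integers h ≥ 1 and real q > 1, ∑_{j=0}^{h-1} 1/(1 - q^{j-h}) ≤ h + q^{-1}/(1 - q^{-1}) + log_q((1 - q^{-h})/(1 - q^{-1})). -/

import Mathlib

/-- Pointwise inequality: for `0 < r < 1` and `0 < x < r`,
`x/(1-x) * log r⁻¹ ≤ log (1-x) - log (1 - x/r)`. -/
lemma stmt_2_ptw (r : ℝ) (hr0 : 0 < r) (hr1 : r < 1) (x : ℝ) (hx0 : 0 < x) (hxr : x < r) :
    x / (1 - x) * Real.log r⁻¹ ≤ Real.log (1 - x) - Real.log (1 - x / r) := by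
  have hx1 : x < 1 := hxr.trans hr1
  have ha : 0 < 1 - x := by linarith
  have hxdr : x / r < 1 := (div_lt_one hr0).mpr hxr
  have hb : 0 < 1 - x / r := by linarith
  have h1 : Real.log ((1 - x / r) / (1 - x)) ≤ (1 - x / r) / (1 - x) - 1 :=
    Real.log_le_sub_one_of_pos (div_pos hb ha)
  rw [Real.log_div hb.ne' ha.ne'] at h1
  have h2 : Real.log r⁻¹ ≤ r⁻¹ - 1 := Real.log_le_sub_one_of_pos (by positivity)
  have e : (1 - x / r) / (1 - x) - 1 = (x - x / r) / (1 - x) := by field_simp; ring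
  have e2 : (x / r - x) / (1 - x) = -((x - x / r) / (1 - x)) := by ring
  have habp : (x / r - x) / (1 - x) ≤ Real.log (1 - x) - Real.log (1 - x / r) := by
    rw [e2]; rw [e] at h1; linarith
  have hxr' : x / r - x = x * (r⁻¹ - 1) := by field_simp
  have hfrac : x / (1 - x) * Real.log r⁻¹ ≤ (x / r - x) / (1 - x) := by
    rw [div_mul_eq_mul_div, hxr']
    gcongr
  linarith

/-- Telescoping bound for the tail sum. -/
lemma stmt_2_tele (r : ℝ) (hr0 : 0 < r) (hr1 : r < 1) (n : ℕ) :
    (∑ j ∈ Finset.range n, r ^ (j + 2) / (1 - r ^ (j + 2))) * Real.log r⁻¹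
      ≤ Real.log (1 - r ^ (n + 1)) - Real.log (1 - r) := by
  rw [Finset.sum_mul]
  have key : ∀ j ∈ Finset.range n,
      r ^ (j + 2) / (1 - r ^ (j + 2)) * Real.log r⁻¹
        ≤ Real.log (1 - r ^ (j + 1 + 1)) - Real.log (1 - r ^ (j + 1)) := by
    intro j _
    have hx0 : 0 < r ^ (j + 2) := by positivity
    have hxr : r ^ (j + 2) < r := by
      calc r ^ (j + 2) ≤ r ^ 2 := pow_le_pow_of_le_one hr0.le hr1.le (by omega)
        _ < r ^ 1 := pow_lt_pow_right_of_lt_one₀ hr0 hr1 one_lt_two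
        _ = r := pow_one r
    have hdiv : r ^ (j + 2) / r = r ^ (j + 1) := by
      rw [pow_succ]
      field_simp
    have := stmt_2_ptw r hr0 hr1 (r ^ (j + 2)) hx0 hxr
    rw [hdiv] at this
    exact this
  calc ∑ j ∈ Finset.range n, r ^ (j + 2) / (1 - r ^ (j + 2)) * Real.log r⁻¹
      ≤ ∑ j ∈ Finset.range n,
          (Real.log (1 - r ^ (j + 1 + 1)) - Real.log (1 - r ^ (j + 1))) :=
        Finset.sum_le_sum key
    _ = Real.log (1 - r ^ (n + 1)) - Real.log (1 - r) := by
        rw [Finset.sum_range_sub (fun j => Real.log (1 - r ^ (j + 1)))]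
        norm_num

/-- The key bound, in terms of `r = q⁻¹`. -/
lemma stmt_2_key (r : ℝ) (hr0 : 0 < r) (hr1 : r < 1) (n : ℕ) :
    ∑ j ∈ Finset.range (n + 1), 1 / (1 - r ^ (j + 1))
      ≤ ((n : ℝ) + 1) + r / (1 - r)
        + (Real.log (1 - r ^ (n + 1)) - Real.log (1 - r)) / Real.log r⁻¹ := by
  have hrpos : ∀ k : ℕ, 0 < 1 - r ^ (k + 1) := fun k => by
    have : r ^ (k + 1) < 1 := pow_lt_one₀ hr0.le hr1 (by omega)
    linarith
  have hlog : 0 < Real.log r⁻¹ := Real.log_pos ((one_lt_inv₀ hr0).mpr hr1)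
  have step1 : ∀ k : ℕ, 1 / (1 - r ^ (k + 1)) = 1 + r ^ (k + 1) / (1 - r ^ (k + 1)) := by
    intro k
    have h0 := (hrpos k).ne'
    field_simp
    ring
  calc ∑ j ∈ Finset.range (n + 1), 1 / (1 - r ^ (j + 1))
      = ∑ j ∈ Finset.range (n + 1), (1 + r ^ (j + 1) / (1 - r ^ (j + 1))) := by
        exact Finset.sum_congr rfl fun j _ => step1 j
    _ = ((n : ℝ) + 1) + ∑ j ∈ Finset.range (n + 1), r ^ (j + 1) / (1 - r ^ (j + 1)) := by
        rw [Finset.sum_add_distrib]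
        simp
    _ = ((n : ℝ) + 1) + (∑ j ∈ Finset.range n, r ^ (j + 2) / (1 - r ^ (j + 2)) + r / (1 - r)) := by
        rw [Finset.sum_range_succ' (fun j => r ^ (j + 1) / (1 - r ^ (j + 1))) n]
        norm_num
    _ ≤ ((n : ℝ) + 1) + r / (1 - r)
        + (Real.log (1 - r ^ (n + 1)) - Real.log (1 - r)) / Real.log r⁻¹ := by
        have h := stmt_2_tele r hr0 hr1 n
        have : ∑ j ∈ Finset.range n, r ^ (j + 2) / (1 - r ^ (j + 2))
            ≤ (Real.log (1 - r ^ (n + 1)) - Real.log (1 - r)) / Real.log r⁻¹ := by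
          rw [le_div_iff₀ hlog]
          exact h
        linarith

/-- For integers `h ≥ 1` and real `q > 1`,
`∑_{j=0}^{h-1} 1/(1 - q^{j-h}) ≤ h + q⁻¹/(1 - q⁻¹) + log_q((1 - q^{-h})/(1 - q⁻¹))`. -/
theorem stmt_2 (q : ℝ) (hq : 1 < q) (h : ℕ) (hh : 1 ≤ h) :
    ∑ j ∈ Finset.range h, 1 / (1 - q ^ ((j : ℤ) - (h : ℤ)))
      ≤ (h : ℝ) + q⁻¹ / (1 - q⁻¹)
          + Real.logb q ((1 - q ^ (-(h : ℤ))) / (1 - q⁻¹)) := by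
  have hq0 : 0 < q := lt_trans one_pos hq
  set r := q⁻¹ with hrdef
  have hr0 : 0 < r := by positivity
  have hr1 : r < 1 := inv_lt_one_of_one_lt₀ hq
  have hrinv : r⁻¹ = q := inv_inv q
  obtain ⟨n, rfl⟩ : ∃ n, h = n + 1 := ⟨h - 1, by omega⟩
  -- rewrite each power as a power of r
  have hpow : ∀ k : ℕ, q ^ (-(k : ℤ)) = r ^ k := by
    intro k
    rw [zpow_neg, zpow_natCast, ← inv_pow]
  have hsum : ∑ j ∈ Finset.range (n + 1), 1 / (1 - q ^ ((j : ℤ) - ((n + 1 : ℕ) : ℤ)))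
      = ∑ j ∈ Finset.range (n + 1), 1 / (1 - r ^ (j + 1)) := by
    rw [← Finset.sum_range_reflect (fun j => 1 / (1 - r ^ (j + 1))) (n + 1)]
    apply Finset.sum_congr rfl
    intro j hj
    simp only [Finset.mem_range] at hj
    have h1 : (n + 1 - 1 - j) + 1 = n + 1 - j := by omega
    have he : ((j : ℤ) - ((n + 1 : ℕ) : ℤ)) = -(((n + 1 - j : ℕ) : ℤ)) := by
      push_cast [Nat.cast_sub (by omega : j ≤ n + 1)]
      ring
    simp only [h1, he, hpow]
  rw [hsum]
  have hmain := stmt_2_key r hr0 hr1 n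
  have hrh : 0 < 1 - r ^ (n + 1) := by
    have : r ^ (n + 1) < 1 := pow_lt_one₀ hr0.le hr1 (by omega)
    linarith
  have hr1' : 0 < 1 - r := by linarith
  have hlogb : Real.logb q ((1 - q ^ (-((n + 1 : ℕ) : ℤ))) / (1 - r))
      = (Real.log (1 - r ^ (n + 1)) - Real.log (1 - r)) / Real.log r⁻¹ := by
    rw [hpow, Real.logb, Real.log_div hrh.ne' hr1'.ne', hrinv]
  rw [hlogb]
  push_cast
  linarith
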